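/- For every integer a ≥ 4, a!/(a^a − a) > C(a,2)! / C(a,2)^{C(a,2)}. -/

import Mathlib

lemma fstep (n : ℕ) (hn : 1 ≤ n) :
    (((n+1).factorial : ℝ)) / ((n+1 : ℕ) : ℝ) ^ (n+1)
      < (n.factorial : ℝ) / (n : ℝ) ^ n := by
  have hn0 : (0:ℝ) < n := by exact_mod_cast hn
  rw [Nat.factorial_succ]
  push_cast
  rw [div_lt_div_iff₀ (by positivity) (by positivity)]
  have hpow : (n:ℝ) ^ n < ((n:ℝ)+1) ^ n := by
    apply pow_lt_pow_left₀ (by linarith) (by positivity)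
    omega
  have hf : (0:ℝ) < (n.factorial : ℝ) := by positivity
  calc ((n:ℝ)+1) * n.factorial * (n:ℝ)^n
      < ((n:ℝ)+1) * n.factorial * ((n:ℝ)+1)^n := by
        apply mul_lt_mul_of_pos_left hpow (by positivity)
    _ = (n.factorial : ℝ) * ((n:ℝ)+1)^(n+1) := by ring

lemma fdec (n m : ℕ) (hn : 1 ≤ n) (hm : n < m) :
    ((m.factorial : ℝ)) / (m : ℝ) ^ m < (n.factorial : ℝ) / (n : ℝ) ^ n := by
  induction m with
  | zero => omega
  | succ k ih =>
    rcases Nat.lt_succ_iff_lt_or_eq.mp hm with h | h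
    · calc (((k+1).factorial : ℝ)) / ((k+1 : ℕ) : ℝ) ^ (k+1)
          < (k.factorial : ℝ) / (k : ℝ) ^ k := fstep k (by omega)
        _ < _ := ih h
    · subst h
      exact fstep n hn

theorem stmt11 (a : ℕ) (ha : 4 ≤ a) :
    ((a.factorial : ℝ) / ((a : ℝ) ^ a - a))
      > ((a.choose 2).factorial : ℝ) / ((a.choose 2 : ℝ) ^ (a.choose 2)) := by
  have hc : a < a.choose 2 := by
    rw [Nat.choose_two_right]
    have heven : 2 ∣ a * (a - 1) := by
      rcases Nat.even_or_odd a with h | h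
      · exact Dvd.dvd.mul_right h.two_dvd _
      · have : Even (a - 1) := by
          rcases h with ⟨k, hk⟩; exact ⟨k, by omega⟩
        exact Dvd.dvd.mul_left this.two_dvd _
    rw [Nat.lt_div_iff_mul_lt' heven]
    have h3 : 3 ≤ a - 1 := by omega
    calc 2 * a < a * 3 := by omega
      _ ≤ a * (a - 1) := Nat.mul_le_mul_left a h3
  have ha1 : (1:ℝ) < a := by exact_mod_cast (by omega : 1 < a)
  have hpow : (a:ℝ) < (a:ℝ) ^ a := by
    calc (a:ℝ) = (a:ℝ)^1 := (pow_one _).symm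
      _ < (a:ℝ)^a := pow_lt_pow_right₀ ha1 (by omega)
  have h1 : (a.factorial : ℝ) / ((a : ℝ) ^ a - a) > (a.factorial : ℝ) / (a:ℝ)^a := by
    apply div_lt_div_of_pos_left (by positivity) (by linarith)
    linarith
  have h2 := fdec a (a.choose 2) (by omega) hc
  linarith
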